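/- Consider the n-pyramid Δ_n colored with c ≥ 2 i.i.d. uniform colors, and let T_3(Δ_n) be the number of monochromatic triangles. Then (T_3(Δ_n) - n/c^2)/n converges in distribution, as n → ∞, to the two-point distribution taking value (1/c)(1 - 1/c) with probability 1/c and value -1/c^2 with probability 1 - 1/c. -/

import Mathlib

open Finset Filter

/-- The `n`-pyramid `Δₙ`: `n` triangles all sharing the common edge `(1,2)` and otherwise
disjoint. -/
def pyramid (n : ℕ) : SimpleGraph (Fin 2 ⊕ Fin n) :=
  SimpleGraph.fromRel fun x y => x.isLeft || y.isLeft

instance pyramidAdjDecidable (n : ℕ) : DecidableRel (pyramid n).Adj := fun x y =>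
  decidable_of_iff _ (SimpleGraph.fromRel_adj _ x y).symm

/-- The number of monochromatic triangles of `G` under the coloring `X`. -/
def monochromaticTriangles {V : Type*} [Fintype V] [DecidableEq V] (G : SimpleGraph V)
    [DecidableRel G.Adj] {c : ℕ} (X : V → Fin c) : ℕ :=
  ((G.cliqueFinset 3).filter fun t => ∀ u ∈ t, ∀ v ∈ t, X u = X v).card

lemma mem_pyramid_cliques {n : ℕ} (s : Finset (Fin 2 ⊕ Fin n)) :
    s ∈ (pyramid n).cliqueFinset 3 ↔ ∃ k, s = {Sum.inl 0, Sum.inl 1, Sum.inr k} := by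
  rw [SimpleGraph.mem_cliqueFinset_iff, SimpleGraph.isNClique_iff]
  constructor
  · rintro ⟨hcl, hcard⟩
    obtain ⟨x, y, z, hxy, hxz, hyz, rfl⟩ := Finset.card_eq_three.mp hcard
    have hxy' : (pyramid n).Adj x y := hcl (by simp) (by simp) hxy
    have hxz' : (pyramid n).Adj x z := hcl (by simp) (by simp) hxz
    have hyz' : (pyramid n).Adj y z := hcl (by simp) (by simp) hyz
    rcases x with a | j <;> rcases y with b | j' <;> rcases z with d | j'' <;>
      simp only [pyramid, SimpleGraph.fromRel_adj, Sum.isLeft_inl, Sum.isLeft_inr,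
        Bool.true_eq_false, or_self, and_false, ne_eq] at hxy' hxz' hyz'
    · -- all inl : impossible
      exfalso
      have ha : a ≠ b := fun h => hxy (by rw [h])
      have hb : a ≠ d := fun h => hxz (by rw [h])
      have hcd : b ≠ d := fun h => hyz (by rw [h])
      have h3 : ({a, b, d} : Finset (Fin 2)).card = 3 :=
        Finset.card_eq_three.mpr ⟨a, b, d, ha, hb, hcd, rfl⟩
      have := Finset.card_le_univ ({a, b, d} : Finset (Fin 2))
      simp [h3] at this
    · -- inl a, inl b, inr j''
      have ha : a ≠ b := fun h => hxy (by rw [h])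
      refine ⟨j'', Finset.ext fun t => ?_⟩
      fin_cases a <;> fin_cases b <;> simp_all <;> tauto
    · -- inl a, inr j', inl d
      have ha : a ≠ d := fun h => hxz (by rw [h])
      refine ⟨j', Finset.ext fun t => ?_⟩
      fin_cases a <;> fin_cases d <;> simp_all <;> tauto
    · exact absurd hyz'.2 (by simp)
    · -- inr j, inl b, inl d
      have ha : b ≠ d := fun h => hyz (by rw [h])
      refine ⟨j, Finset.ext fun t => ?_⟩
      fin_cases b <;> fin_cases d <;> simp_all <;> tauto
    · exact absurd hxz'.2 (by simp)
    · exact absurd hxy'.2 (by simp)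
    · exact absurd hxy'.2 (by simp)
  · rintro ⟨k, rfl⟩
    constructor
    · intro u hu v hv huv
      simp only [Finset.coe_insert, Set.mem_insert_iff, Finset.coe_singleton,
        Set.mem_singleton_iff] at hu hv
      rcases hu with rfl | rfl | rfl <;> rcases hv with rfl | rfl | rfl <;>
        simp_all [pyramid, SimpleGraph.fromRel_adj]
    · simp [Finset.card_insert_of_notMem]

lemma pyramid_cliqueFinset (n : ℕ) :
    (pyramid n).cliqueFinset 3 =
      Finset.image (fun k : Fin n => ({Sum.inl 0, Sum.inl 1, Sum.inr k} :
        Finset (Fin 2 ⊕ Fin n))) Finset.univ := by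
  ext s
  rw [mem_pyramid_cliques]
  simp [eq_comm]

lemma monochromaticTriangles_pyramid {n c : ℕ} (X : (Fin 2 ⊕ Fin n) → Fin c) :
    monochromaticTriangles (pyramid n) X =
      if X (Sum.inl 0) = X (Sum.inl 1) then
        (Finset.univ.filter fun k : Fin n => X (Sum.inr k) = X (Sum.inl 0)).card
      else 0 := by
  have hinj : Function.Injective (fun k : Fin n =>
      ({Sum.inl 0, Sum.inl 1, Sum.inr k} : Finset (Fin 2 ⊕ Fin n))) := by
    intro a b hab
    have : Sum.inr a ∈ ({Sum.inl 0, Sum.inl 1, Sum.inr b} : Finset (Fin 2 ⊕ Fin n)) := by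
      dsimp only at hab
      rw [← hab]; simp
    simpa using this
  rw [monochromaticTriangles, pyramid_cliqueFinset, Finset.filter_image,
    Finset.card_image_of_injective _ hinj]
  have hP : ∀ k : Fin n,
      ((∀ u ∈ ({Sum.inl 0, Sum.inl 1, Sum.inr k} : Finset (Fin 2 ⊕ Fin n)),
        ∀ v ∈ ({Sum.inl 0, Sum.inl 1, Sum.inr k} : Finset (Fin 2 ⊕ Fin n)), X u = X v)
       ↔ (X (Sum.inl 0) = X (Sum.inl 1) ∧ X (Sum.inr k) = X (Sum.inl 0))) := by
    intro k
    constructor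
    · intro h
      exact ⟨h _ (by simp) _ (by simp), h _ (by simp) _ (by simp)⟩
    · rintro ⟨h1, h2⟩ u hu v hv
      simp only [Finset.mem_insert, Finset.mem_singleton] at hu hv
      rcases hu with rfl | rfl | rfl <;> rcases hv with rfl | rfl | rfl <;>
        simp_all
  by_cases h : X (Sum.inl 0) = X (Sum.inl 1)
  · simp only [h, if_true]
    congr 1
    apply Finset.filter_congr
    intro k _
    simp only [hP k, h, true_and]
    try exact eq_comm
  · simp only [h, if_false]
    rw [Finset.card_eq_zero, Finset.filter_eq_empty_iff]
    intro k _
    rw [hP k]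
    tauto

section Aux

variable {c : ℕ} [NeZero c]

def cnt {c n : ℕ} [NeZero c] (Y : Fin n → Fin c) : ℕ :=
  (Finset.univ.filter fun k => Y k = 0).card

lemma cnt_cons {n : ℕ} (v : Fin c) (Y : Fin n → Fin c) :
    cnt (Fin.cons v Y) = (if v = 0 then 1 else 0) + cnt Y := by
  simp only [cnt, Finset.card_filter, Fin.sum_univ_succ, Fin.cons_zero, Fin.cons_succ]

lemma sum_cnt_succ {M : Type*} [AddCommMonoid M] (n : ℕ) (g : ℕ → M) :
    ∑ Y : Fin (n+1) → Fin c, g (cnt Y)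
      = ∑ v : Fin c, ∑ Y : Fin n → Fin c, g ((if v = 0 then 1 else 0) + cnt Y) := by
  calc ∑ Y : Fin (n+1) → Fin c, g (cnt Y)
      = ∑ p : Fin c × (Fin n → Fin c), g (cnt (Fin.cons p.1 p.2)) :=
        (Fintype.sum_equiv (Fin.consEquiv fun _ => Fin c) _ _ (fun p => rfl)).symm
    _ = ∑ v : Fin c, ∑ Y : Fin n → Fin c, g ((if v = 0 then 1 else 0) + cnt Y) := by
        rw [Fintype.sum_prod_type]
        exact Finset.sum_congr rfl fun v _ => Finset.sum_congr rfl fun Y _ => by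
          rw [cnt_cons]

omit [NeZero c] in
lemma m0 (n : ℕ) : ∑ _Y : Fin n → Fin c, (1 : ℤ) = (c : ℤ) ^ n := by
  simp [Finset.card_univ]

lemma m1 (n : ℕ) : (c : ℤ) * ∑ Y : Fin n → Fin c, (cnt Y : ℤ) = n * (c : ℤ) ^ n := by
  induction n with
  | zero => simp [cnt]
  | succ n ih =>
    rw [sum_cnt_succ (c := c) n (fun t => (t : ℤ))]
    have h : ∀ v : Fin c, ∑ Y : Fin n → Fin c, (((if v = 0 then 1 else 0) + cnt Y : ℕ) : ℤ)
        = (if v = 0 then (c : ℤ)^n else 0) + ∑ Y : Fin n → Fin c, (cnt Y : ℤ) := by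
      intro v
      push_cast
      rw [Finset.sum_add_distrib, Finset.sum_const, Finset.card_univ]
      congr 1
      split <;> simp [Fintype.card_fun]
    rw [Finset.sum_congr rfl fun v _ => h v, Finset.sum_add_distrib,
      Finset.sum_ite_eq' Finset.univ (0 : Fin c) (fun _ => (c : ℤ)^n),
      Finset.sum_const, Finset.card_univ]
    simp only [Finset.mem_univ, if_true, Fintype.card_fin, nsmul_eq_mul]
    push_cast
    linear_combination (c : ℤ) * ih

lemma m2 (n : ℕ) : (c : ℤ)^2 * ∑ Y : Fin n → Fin c, (cnt Y : ℤ)^2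
    = n * (n + c - 1) * (c : ℤ) ^ n := by
  induction n with
  | zero => simp [cnt]
  | succ n ih =>
    rw [sum_cnt_succ (c := c) n (fun t => ((t : ℤ))^2)]
    have h : ∀ v : Fin c, ∑ Y : Fin n → Fin c, (((if v = 0 then 1 else 0) + cnt Y : ℕ) : ℤ)^2
        = (if v = 0 then ((c : ℤ)^n + 2 * ∑ Y : Fin n → Fin c, (cnt Y : ℤ)) else 0)
          + ∑ Y : Fin n → Fin c, (cnt Y : ℤ)^2 := by
      intro v
      by_cases hv : v = 0
      · simp only [hv, if_true]
        have e : ∀ Y : Fin n → Fin c, ((((1 : ℕ) + cnt Y : ℕ)) : ℤ)^2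
            = 1 + 2*(cnt Y : ℤ) + (cnt Y : ℤ)^2 := fun Y => by push_cast; ring
        rw [Finset.sum_congr rfl fun Y _ => e Y, Finset.sum_add_distrib,
          Finset.sum_add_distrib, Finset.sum_const, Finset.card_univ, ← Finset.mul_sum]
        simp [Fintype.card_fun]
        try ring
      · simp [hv]
    rw [Finset.sum_congr rfl fun v _ => h v, Finset.sum_add_distrib,
      Finset.sum_ite_eq' Finset.univ (0 : Fin c) _, Finset.sum_const, Finset.card_univ]
    simp only [Finset.mem_univ, if_true, Fintype.card_fin, nsmul_eq_mul]
    push_cast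
    linear_combination (c : ℤ) * ih + 2 * (c : ℤ) * m1 (c := c) n

lemma sum_sq_dev (n : ℕ) :
    ∑ Y : Fin n → Fin c, ((c : ℤ) * cnt Y - n)^2 = n * ((c : ℤ) - 1) * (c : ℤ)^n := by
  have e : ∀ Y : Fin n → Fin c, ((c : ℤ) * cnt Y - n)^2
      = (c : ℤ)^2 * (cnt Y : ℤ)^2 - 2 * (n : ℤ) * ((c : ℤ) * (cnt Y : ℤ)) + (n : ℤ)^2 * 1 :=
    fun Y => by ring
  rw [Finset.sum_congr rfl fun Y _ => e Y, Finset.sum_add_distrib, Finset.sum_sub_distrib,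
    ← Finset.mul_sum, ← Finset.mul_sum, ← Finset.mul_sum, ← Finset.mul_sum]
  rw [m2, m0]
  have := m1 (c := c) n
  linear_combination (-2 * (n : ℤ)) * this

lemma bad_card (n : ℕ) (hn : 1 ≤ n) (δ : ℝ) (hδ : 0 < δ) :
    ((Finset.univ.filter fun Y : Fin n → Fin c =>
        δ ≤ |(cnt Y : ℝ)/n - 1/c|).card : ℝ) * (n * δ^2) ≤ (c : ℝ)^n := by
  have hc1 : (1 : ℝ) ≤ c := by
    have := Nat.one_le_iff_ne_zero.mpr (NeZero.ne c); exact_mod_cast this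
  have hc0 : (0 : ℝ) < c := by linarith
  have hn0 : (0 : ℝ) < n := by exact_mod_cast hn
  set B := Finset.univ.filter fun Y : Fin n → Fin c => δ ≤ |(cnt Y : ℝ)/n - 1/c| with hB
  have key : ∀ Y ∈ B, ((c : ℝ)*n*δ)^2 ≤ ((c : ℝ)*(cnt Y) - n)^2 := by
    intro Y hY
    have hY' : δ ≤ |(cnt Y : ℝ)/n - 1/c| := (Finset.mem_filter.mp hY).2
    have h1 : |(c : ℝ)*(cnt Y) - n| = (c*n) * |(cnt Y : ℝ)/n - 1/c| := by
      rw [← abs_of_pos (show (0:ℝ) < (c:ℝ)*n from by positivity), ← abs_mul]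
      congr 1
      field_simp
    have h2 : (c : ℝ)*n*δ ≤ |(c : ℝ)*(cnt Y) - n| := by
      rw [h1]
      exact mul_le_mul_of_nonneg_left hY' (by positivity)
    calc ((c : ℝ)*n*δ)^2 ≤ |(c : ℝ)*(cnt Y) - n|^2 :=
          pow_le_pow_left₀ (by positivity) h2 2
      _ = ((c : ℝ)*(cnt Y) - n)^2 := sq_abs _
  have h2 : (B.card : ℝ) * ((c : ℝ)*n*δ)^2 ≤ ∑ Y ∈ B, ((c : ℝ)*(cnt Y) - n)^2 := by
    have := Finset.card_nsmul_le_sum B (fun Y => ((c : ℝ)*(cnt Y) - n)^2) (((c : ℝ)*n*δ)^2) key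
    simpa [nsmul_eq_mul] using this
  have h3 : ∑ Y ∈ B, ((c : ℝ)*(cnt Y) - n)^2 ≤ ∑ Y : Fin n → Fin c, ((c : ℝ)*(cnt Y) - n)^2 :=
    Finset.sum_le_sum_of_subset_of_nonneg (Finset.filter_subset _ _) (fun Y _ _ => sq_nonneg _)
  have h4 : ∑ Y : Fin n → Fin c, ((c : ℝ)*(cnt Y) - n)^2 = n*((c : ℝ)-1)*(c : ℝ)^n := by
    have := congrArg (fun z : ℤ => (z : ℝ)) (sum_sq_dev (c := c) n)
    push_cast at this
    exact this
  have h5 : (B.card : ℝ) * ((c : ℝ)*n*δ)^2 ≤ n*((c : ℝ)-1)*(c : ℝ)^n := by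
    calc (B.card : ℝ) * ((c : ℝ)*n*δ)^2 ≤ ∑ Y ∈ B, ((c : ℝ)*(cnt Y) - n)^2 := h2
      _ ≤ _ := h3
      _ = _ := h4
  have hpow : (0 : ℝ) < (c : ℝ)^n := by positivity
  have h6 : (B.card : ℝ) * (n * δ^2) * ((c:ℝ)^2 * n) ≤ (c : ℝ)^n * ((c:ℝ)^2 * n) := by
    calc (B.card : ℝ) * (n * δ^2) * ((c:ℝ)^2 * n) = (B.card : ℝ) * ((c : ℝ)*n*δ)^2 := by ring
      _ ≤ n*((c : ℝ)-1)*(c : ℝ)^n := h5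
      _ ≤ (c : ℝ)^n * ((c:ℝ)^2 * n) := by
          have h7 : (c:ℝ) - 1 ≤ (c:ℝ)^2 := by nlinarith
          nlinarith [mul_pos hn0 hpow, h7]
  exact le_of_mul_le_mul_right h6 (by positivity)

lemma tendsto_A (hc : 2 ≤ c) (f : BoundedContinuousFunction ℝ ℝ) :
    Tendsto (fun n : ℕ => (∑ Y : Fin n → Fin c, f ((cnt Y : ℝ)/n - 1/(c : ℝ)^2)) / (c : ℝ)^n)
      atTop (nhds (f (1/(c:ℝ) - 1/(c : ℝ)^2))) := by
  have hc0 : (0 : ℝ) < c := by exact_mod_cast Nat.lt_of_lt_of_le Nat.zero_lt_two hc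
  set L : ℝ := 1/(c:ℝ) - 1/(c : ℝ)^2 with hL
  rw [Metric.tendsto_atTop]
  intro ε hε
  obtain ⟨δ, hδ, hδf⟩ := Metric.continuousAt_iff.mp (f.continuous.continuousAt (x := L))
    (ε/2) (by linarith)
  set M : ℝ := 2*‖f‖ + 1 with hM
  have hM0 : 0 < M := by have := norm_nonneg f; positivity
  obtain ⟨N₀, hN₀⟩ := exists_nat_gt (2*M/(ε*δ^2))
  refine ⟨max N₀ 1, fun n hn => ?_⟩
  have hn1 : 1 ≤ n := le_trans (le_max_right _ _) hn
  have hnN : (N₀ : ℝ) ≤ n := by exact_mod_cast le_trans (le_max_left _ _) hn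
  have hn0 : (0 : ℝ) < n := by exact_mod_cast hn1
  have hpow : (0 : ℝ) < (c : ℝ)^n := by positivity
  set B := Finset.univ.filter fun Y : Fin n → Fin c => δ ≤ |(cnt Y : ℝ)/n - 1/c| with hB
  -- pointwise bounds
  have hgood : ∀ Y : Fin n → Fin c, Y ∉ B → |f ((cnt Y : ℝ)/n - 1/(c : ℝ)^2) - f L| ≤ ε/2 := by
    intro Y hY
    have h1 : ¬ (δ ≤ |(cnt Y : ℝ)/n - 1/c|) := by
      intro h; exact hY (Finset.mem_filter.mpr ⟨Finset.mem_univ _, h⟩)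
    push_neg at h1
    have h2 : dist ((cnt Y : ℝ)/n - 1/(c : ℝ)^2) L < δ := by
      rw [Real.dist_eq, hL]
      have : (cnt Y : ℝ)/n - 1/(c : ℝ)^2 - (1/(c:ℝ) - 1/(c : ℝ)^2) = (cnt Y : ℝ)/n - 1/c := by
        ring
      rw [this]; exact h1
    have := hδf h2
    rw [Real.dist_eq] at this
    linarith
  have hbad : ∀ Y : Fin n → Fin c, |f ((cnt Y : ℝ)/n - 1/(c : ℝ)^2) - f L| ≤ M := by
    intro Y
    have := BoundedContinuousFunction.dist_le_two_norm f ((cnt Y : ℝ)/n - 1/(c : ℝ)^2) L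
    rw [Real.dist_eq] at this
    linarith
  -- main estimate
  have hdiff : (∑ Y : Fin n → Fin c, f ((cnt Y : ℝ)/n - 1/(c : ℝ)^2)) / (c : ℝ)^n - f L
      = (∑ Y : Fin n → Fin c, (f ((cnt Y : ℝ)/n - 1/(c : ℝ)^2) - f L)) / (c : ℝ)^n := by
    rw [Finset.sum_sub_distrib, Finset.sum_const, Finset.card_univ]
    simp only [Fintype.card_fun, Fintype.card_fin, nsmul_eq_mul]
    push_cast
    field_simp
    exact congrArg (· - _) (Finset.sum_congr rfl fun x _ => congrArg f (by ring))
  have habs : |∑ Y : Fin n → Fin c, (f ((cnt Y : ℝ)/n - 1/(c : ℝ)^2) - f L)|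
      ≤ (c:ℝ)^n * (ε/2) + (B.card : ℝ) * M := by
    calc |∑ Y : Fin n → Fin c, (f ((cnt Y : ℝ)/n - 1/(c : ℝ)^2) - f L)|
        ≤ ∑ Y : Fin n → Fin c, |f ((cnt Y : ℝ)/n - 1/(c : ℝ)^2) - f L| :=
          Finset.abs_sum_le_sum_abs _ _
      _ = (∑ Y ∈ B, |f ((cnt Y : ℝ)/n - 1/(c : ℝ)^2) - f L|)
          + ∑ Y ∈ Finset.univ.filter (fun Y => ¬ (δ ≤ |(cnt Y : ℝ)/n - 1/c|)),
              |f ((cnt Y : ℝ)/n - 1/(c : ℝ)^2) - f L| :=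
          (Finset.sum_filter_add_sum_filter_not _ _ _).symm
      _ ≤ (B.card : ℝ) * M + (c:ℝ)^n * (ε/2) := by
          gcongr ?_ + ?_
          · calc ∑ Y ∈ B, |f ((cnt Y : ℝ)/n - 1/(c : ℝ)^2) - f L|
                ≤ ∑ _Y ∈ B, M := Finset.sum_le_sum fun Y _ => hbad Y
              _ = (B.card : ℝ) * M := by rw [Finset.sum_const, nsmul_eq_mul]
          · calc ∑ Y ∈ Finset.univ.filter (fun Y => ¬ (δ ≤ |(cnt Y : ℝ)/n - 1/c|)),
                  |f ((cnt Y : ℝ)/n - 1/(c : ℝ)^2) - f L|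
                ≤ ∑ _Y ∈ Finset.univ.filter (fun Y : Fin n → Fin c =>
                    ¬ (δ ≤ |(cnt Y : ℝ)/n - 1/c|)), (ε/2) := by
                  refine Finset.sum_le_sum fun Y hY => ?_
                  exact hgood Y (by simp only [hB, Finset.mem_filter] at hY ⊢; tauto)
              _ ≤ (c:ℝ)^n * (ε/2) := by
                  rw [Finset.sum_const, nsmul_eq_mul]
                  have : ((Finset.univ.filter (fun Y : Fin n → Fin c =>
                      ¬ (δ ≤ |(cnt Y : ℝ)/n - 1/c|))).card : ℝ) ≤ (c:ℝ)^n := by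
                    have h := Finset.card_filter_le Finset.univ
                      (fun Y : Fin n → Fin c => ¬ (δ ≤ |(cnt Y : ℝ)/n - 1/c|))
                    have : ((Finset.univ : Finset (Fin n → Fin c)).card : ℝ) = (c:ℝ)^n := by
                      simp [Finset.card_univ, Fintype.card_fun]
                    calc ((Finset.univ.filter _).card : ℝ) ≤ ((Finset.univ :
                        Finset (Fin n → Fin c)).card : ℝ) := by exact_mod_cast h
                      _ = (c:ℝ)^n := this
                  exact mul_le_mul_of_nonneg_right this (by linarith)
      _ = (c:ℝ)^n * (ε/2) + (B.card : ℝ) * M := by ring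
  have hbadcard : (B.card : ℝ) ≤ (c:ℝ)^n / (n * δ^2) := by
    have h := bad_card (c := c) n hn1 δ hδ
    rw [le_div_iff₀ (by positivity)]
    exact h
  have hMsmall : M / (n * δ^2) < ε/2 := by
    rw [div_lt_iff₀ (by positivity)]
    have h1 : 2*M/(ε*δ^2) < n := lt_of_lt_of_le hN₀ hnN
    rw [div_lt_iff₀ (by positivity)] at h1
    nlinarith
  rw [Real.dist_eq, hdiff, abs_div, abs_of_pos hpow]
  rw [div_lt_iff₀ hpow]
  calc |∑ Y : Fin n → Fin c, (f ((cnt Y : ℝ)/n - 1/(c : ℝ)^2) - f L)|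
      ≤ (c:ℝ)^n * (ε/2) + (B.card : ℝ) * M := habs
    _ ≤ (c:ℝ)^n * (ε/2) + ((c:ℝ)^n / (n * δ^2)) * M := by gcongr
    _ = (c:ℝ)^n * (ε/2 + M / (n * δ^2)) := by ring
    _ < (c:ℝ)^n * ε := by
        rw [mul_lt_mul_iff_right₀ hpow]
        linarith
    _ = ε * (c:ℝ)^n := by ring

lemma sum_count_color (n : ℕ) (a : Fin c) (g : ℕ → ℝ) :
    ∑ Y : Fin n → Fin c, g ((Finset.univ.filter fun k => Y k = a).card)
      = ∑ Y : Fin n → Fin c, g (cnt Y) := by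
  apply Fintype.sum_equiv (Equiv.arrowCongr (Equiv.refl (Fin n)) (Equiv.swap a 0))
  intro Y
  congr 1
  unfold cnt
  congr 1
  apply Finset.filter_congr
  intro k _
  simp only [Equiv.arrowCongr_apply, Function.comp_apply, Equiv.refl_symm, Equiv.refl_apply]
  constructor
  · intro h
    rw [h, Equiv.swap_apply_left]
  · intro h
    have : Equiv.swap a 0 (Y k) = Equiv.swap a 0 a := by rw [h, Equiv.swap_apply_left]
    exact (Equiv.swap a 0).injective this

lemma key_decomp {c : ℕ} [NeZero c] (n : ℕ) (hn : 1 ≤ n) (f : BoundedContinuousFunction ℝ ℝ) :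
    (∑ X : (Fin 2 ⊕ Fin n) → Fin c,
        f (((monochromaticTriangles (pyramid n) X : ℝ) - n / (c : ℝ) ^ 2) / n))
      / (c : ℝ) ^ (n + 2)
    = (1/(c:ℝ)) * ((∑ Y : Fin n → Fin c, f ((cnt Y : ℝ)/n - 1/(c : ℝ)^2)) / (c : ℝ)^n)
      + (1 - 1/(c:ℝ)) * f (-1/(c : ℝ)^2) := by
  have hc0 : (c : ℝ) ≠ 0 := Nat.cast_ne_zero.mpr (NeZero.ne c)
  have hn0 : (n : ℝ) ≠ 0 := Nat.cast_ne_zero.mpr (by omega)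
  set F : ((Fin 2 ⊕ Fin n) → Fin c) → ℝ := fun X =>
    f (((monochromaticTriangles (pyramid n) X : ℝ) - n / (c : ℝ) ^ 2) / n) with hF
  set K : ℝ := (c : ℝ)^n * f (-1/(c : ℝ)^2) with hK
  set S0 : ℝ := ∑ Y : Fin n → Fin c, f ((cnt Y : ℝ)/n - 1/(c : ℝ)^2) with hS0
  -- step 1 : reindex over pairs
  have step1 : ∑ X : (Fin 2 ⊕ Fin n) → Fin c, F X
      = ∑ g : Fin 2 → Fin c, ∑ Y : Fin n → Fin c, F (Sum.elim g Y) := by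
    calc ∑ X : (Fin 2 ⊕ Fin n) → Fin c, F X
        = ∑ p : (Fin 2 → Fin c) × (Fin n → Fin c), F (Sum.elim p.1 p.2) :=
          Fintype.sum_equiv (Equiv.sumArrowEquivProdArrow (Fin 2) (Fin n) (Fin c)) F
            (fun p => F (Sum.elim p.1 p.2)) (fun X => congrArg F (funext fun x => by
              cases x <;> rfl))
      _ = ∑ g : Fin 2 → Fin c, ∑ Y : Fin n → Fin c, F (Sum.elim g Y) :=
          Fintype.sum_prod_type (f := fun p => F (Sum.elim p.1 p.2))
  -- step 2 : reindex g over Fin c × Fin c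
  have step2 : ∑ g : Fin 2 → Fin c, ∑ Y : Fin n → Fin c, F (Sum.elim g Y)
      = ∑ a : Fin c, ∑ b : Fin c, ∑ Y : Fin n → Fin c, F (Sum.elim ![a, b] Y) := by
    calc ∑ g : Fin 2 → Fin c, ∑ Y : Fin n → Fin c, F (Sum.elim g Y)
        = ∑ p : Fin c × Fin c, ∑ Y : Fin n → Fin c, F (Sum.elim ![p.1, p.2] Y) :=
          Fintype.sum_equiv (finTwoArrowEquiv (Fin c))
            (fun g => ∑ Y : Fin n → Fin c, F (Sum.elim g Y))
            (fun p => ∑ Y : Fin n → Fin c, F (Sum.elim ![p.1, p.2] Y))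
            (fun g => Finset.sum_congr rfl fun Y _ => congrArg F (funext fun x => by
              cases x with
              | inl i =>
                simp only [finTwoArrowEquiv_apply, Sum.elim_inl]
                fin_cases i <;> simp
              | inr k => rfl))
      _ = ∑ a : Fin c, ∑ b : Fin c, ∑ Y : Fin n → Fin c, F (Sum.elim ![a, b] Y) :=
          Fintype.sum_prod_type (f := fun p => ∑ Y : Fin n → Fin c, F (Sum.elim ![p.1, p.2] Y))
  -- inner sums
  have hinner : ∀ a b : Fin c, ∑ Y : Fin n → Fin c, F (Sum.elim ![a, b] Y)
      = if a = b then S0 else K := by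
    intro a b
    have hFval : ∀ Y : Fin n → Fin c, F (Sum.elim ![a, b] Y)
        = f ((((if a = b then (Finset.univ.filter fun k : Fin n => Y k = a).card
            else 0 : ℕ) : ℝ) - n / (c : ℝ) ^ 2) / n) := by
      intro Y
      have hm : monochromaticTriangles (pyramid n) (Sum.elim ![a, b] Y)
          = if a = b then (Finset.univ.filter fun k : Fin n => Y k = a).card else 0 := by
        rw [monochromaticTriangles_pyramid]
        simp
        split_ifs <;> congr
      show f ((((monochromaticTriangles (pyramid n) (Sum.elim ![a, b] Y) : ℕ)) - n / (c:ℝ)^2) / n)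
          = _
      rw [hm]
    rw [Finset.sum_congr rfl fun Y _ => hFval Y]
    by_cases hab : a = b
    · simp only [hab, if_true]
      rw [show (∑ Y : Fin n → Fin c,
          f ((((Finset.univ.filter fun k : Fin n => Y k = b).card : ℝ) - n / (c : ℝ)^2) / n))
          = ∑ Y : Fin n → Fin c,
            (fun t : ℕ => f (((t : ℝ) - n / (c : ℝ)^2) / n))
              ((Finset.univ.filter fun k : Fin n => Y k = b).card) from rfl,
        sum_count_color n b (fun t : ℕ => f (((t : ℝ) - n / (c : ℝ)^2) / n)), hS0]
      refine Finset.sum_congr rfl fun Y _ => congrArg f ?_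
      field_simp
      try ring
      try tauto
    · simp only [hab, if_false]
      rw [hK]
      have harg : (((0 : ℕ) : ℝ) - n / (c : ℝ)^2) / n = -1/(c : ℝ)^2 := by
        field_simp
        try ring
      simp only [harg]
      rw [Finset.sum_const, Finset.card_univ]
      simp [Fintype.card_fun]
  -- outer sum
  have houter : ∑ a : Fin c, ∑ b : Fin c, (if a = b then S0 else K)
      = (c : ℝ) * ((S0 - K) + (c : ℝ) * K) := by
    have hb : ∀ a : Fin c, ∑ b : Fin c, (if a = b then S0 else K) = (S0 - K) + (c : ℝ) * K := by
      intro a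
      have : ∀ b : Fin c, (if a = b then S0 else K) = (if a = b then S0 - K else 0) + K := by
        intro b; split <;> ring
      rw [Finset.sum_congr rfl fun b _ => this b, Finset.sum_add_distrib,
        Finset.sum_ite_eq Finset.univ a (fun _ => S0 - K), Finset.sum_const, Finset.card_univ]
      simp [nsmul_eq_mul]
    rw [Finset.sum_congr rfl fun a _ => hb a, Finset.sum_const, Finset.card_univ]
    simp only [Fintype.card_fin, nsmul_eq_mul]
    try ring
  rw [step1, step2, Finset.sum_congr rfl fun a _ => Finset.sum_congr rfl fun b _ => hinner a b,
    houter, hK]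
  have hpow : (c : ℝ)^n ≠ 0 := pow_ne_zero _ hc0
  field_simp
  try ring


end Aux

/-- Under uniformly random `c`-coloring (`c ≥ 2`) of the `n`-pyramid `Δₙ`,
`(T₃(Δₙ) - n/c²)/n` converges in distribution, as `n → ∞`, to the two-point distribution taking
the value `(1/c)(1 - 1/c)` with probability `1/c` and the value `-1/c²` with probability
`1 - 1/c`: for every bounded continuous test function `f`, the expectations converge. -/
theorem pyramid_nonnormal_limit (c : ℕ) (hc : 2 ≤ c) (f : BoundedContinuousFunction ℝ ℝ) :
    Tendsto
      (fun n : ℕ =>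
        (∑ X : (Fin 2 ⊕ Fin n) → Fin c,
            f (((monochromaticTriangles (pyramid n) X : ℝ) - n / (c : ℝ) ^ 2) / n))
          / (c : ℝ) ^ (n + 2))
      atTop
      (nhds ((1 / c) * f ((1 / c) * (1 - 1 / c)) + (1 - 1 / c) * f (-1 / (c : ℝ) ^ 2))) := by
  haveI : NeZero c := ⟨by omega⟩
  have hL : (1 / (c : ℝ)) * (1 - 1 / (c : ℝ)) = 1 / (c : ℝ) - 1 / (c : ℝ) ^ 2 := by ring
  rw [hL]
  have h := ((tendsto_A (c := c) hc f).const_mul (1 / (c : ℝ))).add_const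
    ((1 - 1 / (c : ℝ)) * f (-1 / (c : ℝ) ^ 2))
  apply Tendsto.congr' _ h
  filter_upwards [eventually_ge_atTop 1] with n hn
  exact (key_decomp n hn f).symm
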